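/- Let s > 1/2. There exists a constant C(s) > 0 such that for all F, G ∈ L^{2,s}(ℝ), the kernel K(z,λ) := 1_{(−∞,0)}(z) ∫₀^∞ F(z − u) G(u − λ) du belongs to L²(ℝ × ℝ) and ‖K‖_{L²(ℝ×ℝ)} ≤ C(s) ‖F‖_{L^{2,s}(ℝ)} ‖G‖_{L^{2,s}(ℝ)}. In particular, the integral operator on L²(ℝ) with kernel K is Hilbert–Schmidt, hence compact. -/

import Mathlib

open MeasureTheory Filter Set
open scoped Topology ENNReal

noncomputable section

/-- The weighted `L^{2,s}` norm `‖⟨·⟩^s f‖_{L²}` (as a real number). -/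
def L2sNorm (s : ℝ) (f : ℝ → ℂ) : ℝ :=
  (eLpNorm (fun x : ℝ => ((1 + x ^ 2) ^ (s / 2) : ℝ) • f x) 2 (volume : Measure ℝ)).toReal

/-- Membership in the weighted space `L^{2,s}(ℝ)`: `f` measurable with `⟨·⟩^s f ∈ L²`. -/
def MemL2s (s : ℝ) (f : ℝ → ℂ) : Prop :=
  Measurable f ∧
    MemLp (fun x : ℝ => ((1 + x ^ 2) ^ (s / 2) : ℝ) • f x) 2 (volume : Measure ℝ)

/-- The kernel `K(z,λ) = 1_{(−∞,0)}(z) ∫₀^∞ F(z − u) G(u − λ) du`. -/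
def Kern (F G : ℝ → ℂ) (p : ℝ × ℝ) : ℂ :=
  if p.1 < 0 then ∫ u in Set.Ioi (0 : ℝ), F (p.1 - u) * G (u - p.2) else 0

private lemma two_two : Real.HolderConjugate 2 2 := Real.HolderConjugate.two_two

/-- Cauchy–Schwarz for lower integrals. -/
private lemma cs_sq {α : Type*} [MeasurableSpace α] (μ : Measure α) {φ ψ : α → ℝ≥0∞}
    (hφ : AEMeasurable φ μ) (hψ : AEMeasurable ψ μ) :
    (∫⁻ a, φ a * ψ a ∂μ) ^ 2 ≤ (∫⁻ a, φ a ^ 2 ∂μ) * (∫⁻ a, ψ a ^ 2 ∂μ) := by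
  have h := ENNReal.lintegral_mul_le_Lp_mul_Lq μ two_two hφ hψ
  have h2 : (∫⁻ a, φ a * ψ a ∂μ) ^ 2 ≤
      ((∫⁻ a, φ a ^ (2:ℝ) ∂μ) ^ (1/(2:ℝ)) * (∫⁻ a, ψ a ^ (2:ℝ) ∂μ) ^ (1/(2:ℝ))) ^ 2 :=
    pow_le_pow_left₀ zero_le h 2
  refine h2.trans_eq ?_
  rw [mul_pow, ← ENNReal.rpow_natCast (_ ^ (1/(2:ℝ))) 2, ← ENNReal.rpow_natCast (_ ^ (1/(2:ℝ))) 2,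
    ← ENNReal.rpow_mul, ← ENNReal.rpow_mul]
  norm_num

private lemma weight_int {s : ℝ} (hs : 1/2 < s) :
    (∫⁻ x : ℝ, ENNReal.ofReal ((1 + x ^ 2) ^ (-s)) ∂(volume : Measure ℝ)) < ⊤ := by
  have h : Integrable (fun x : ℝ => ((1:ℝ) + ‖x‖ ^ 2) ^ (-(2*s) / 2)) (volume : Measure ℝ) := by
    apply integrable_rpow_neg_one_add_norm_sq
    simp [Module.finrank_self]
    linarith
  have h2 := h.hasFiniteIntegral
  rw [HasFiniteIntegral] at h2
  refine lt_of_le_of_lt (lintegral_mono fun x => ?_) h2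
  have : ((1:ℝ) + ‖x‖ ^ 2) ^ (-(2*s) / 2) = (1 + x ^ 2) ^ (-s) := by
    rw [Real.norm_eq_abs, sq_abs]; congr 1; ring
  rw [← this]
  exact Real.ofReal_le_enorm _

private lemma neg_le_weight {s : ℝ} (hs : (1:ℝ)/2 ≤ s) (t : ℝ) : -t ≤ (1 + t ^ 2) ^ s := by
  rcases le_or_gt (-t) 0 with h | h
  · exact h.trans (Real.rpow_nonneg (by positivity) s)
  · have h1 : -t ≤ (1 + t ^ 2) ^ ((1:ℝ)/2) := by
      rw [← Real.sqrt_eq_rpow]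
      have : -t = Real.sqrt (t ^ 2) := by
        rw [Real.sqrt_sq_eq_abs, abs_of_neg (by linarith)]
      rw [this]
      exact Real.sqrt_le_sqrt (by linarith)
    exact h1.trans (Real.rpow_le_rpow_of_exponent_le (by nlinarith) hs)

private lemma measurable_kern (F G : ℝ → ℂ) (hF : Measurable F) (hG : Measurable G) :
    Measurable (Kern F G) := by
  have h1 : StronglyMeasurable (fun q : (ℝ × ℝ) × ℝ => F (q.1.1 - q.2) * G (q.2 - q.1.2)) :=
    Measurable.stronglyMeasurable
      ((hF.comp ((measurable_fst.comp measurable_fst).sub measurable_snd)).mul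
        (hG.comp (measurable_snd.sub (measurable_snd.comp measurable_fst))))
  have h2 := h1.integral_prod_right' (ν := (volume : Measure ℝ).restrict (Set.Ioi (0:ℝ)))
  exact Measurable.ite (measurableSet_lt measurable_fst measurable_const)
    h2.measurable measurable_const

/-- The core analytic estimate. -/
private lemma kern_sq_bound (s : ℝ) (hs : 1/2 < s) (F G : ℝ → ℂ)
    (hF : Measurable F) (hG : Measurable G) :
    (∫⁻ p : ℝ × ℝ, (‖Kern F G p‖₊ : ℝ≥0∞) ^ 2) ≤
      (∫⁻ x : ℝ, ENNReal.ofReal ((1 + x ^ 2) ^ (-s)))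
        * (∫⁻ x : ℝ, ENNReal.ofReal ((1 + x ^ 2) ^ s) * (‖G x‖₊ : ℝ≥0∞) ^ 2)
        * (∫⁻ x : ℝ, ENNReal.ofReal ((1 + x ^ 2) ^ s) * (‖F x‖₊ : ℝ≥0∞) ^ 2) := by
  set f : ℝ → ℝ≥0∞ := fun x => (‖F x‖₊ : ℝ≥0∞) with hf_def
  set g : ℝ → ℝ≥0∞ := fun x => (‖G x‖₊ : ℝ≥0∞) with hg_def
  have mf : Measurable f := hF.nnnorm.coe_nnreal_ennreal
  have mg : Measurable g := hG.nnnorm.coe_nnreal_ennreal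
  set A : ℝ≥0∞ := ∫⁻ x, g x with hA_def
  set W : ℝ → ℝ≥0∞ := fun x => ENNReal.ofReal ((1 + x ^ 2) ^ s) with hW_def
  set Cs : ℝ≥0∞ := ∫⁻ x : ℝ, ENNReal.ofReal ((1 + x ^ 2) ^ (-s)) with hCs_def
  have hx0 : ∀ x : ℝ, (0:ℝ) < 1 + x ^ 2 := fun x => by positivity
  -- translation invariance
  have trans_g : ∀ c : ℝ, (∫⁻ x : ℝ, g (x - c)) = A := fun c => by
    simpa [sub_eq_add_neg] using
      (measurePreserving_add_right (volume : Measure ℝ) (-c)).lintegral_comp mg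
  have refl_g : ∀ c : ℝ, (∫⁻ x : ℝ, g (c - x)) = A := fun c => by
    simpa using
      (Measure.measurePreserving_sub_left (volume : Measure ℝ) c).lintegral_comp mg
  -- Step 1 : A ^ 2 ≤ Cs * ∫ W g²
  have hA2 : A ^ 2 ≤ Cs * ∫⁻ x, W x * g x ^ 2 := by
    have hpt : ∀ x : ℝ, g x =
        ENNReal.ofReal ((1 + x ^ 2) ^ (-(s/2))) * (ENNReal.ofReal ((1 + x ^ 2) ^ (s/2)) * g x) := by
      intro x
      rw [← mul_assoc, ← ENNReal.ofReal_mul (Real.rpow_nonneg (hx0 x).le _),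
        ← Real.rpow_add (hx0 x)]
      norm_num
    have hcs := cs_sq (volume : Measure ℝ)
      (φ := fun x : ℝ => ENNReal.ofReal ((1 + x ^ 2) ^ (-(s/2))))
      (ψ := fun x : ℝ => ENNReal.ofReal ((1 + x ^ 2) ^ (s/2)) * g x)
      (by fun_prop) ((by fun_prop : Measurable fun x : ℝ =>
        ENNReal.ofReal ((1 + x ^ 2) ^ (s/2)) * g x).aemeasurable)
    have e1 : (∫⁻ x : ℝ, ENNReal.ofReal ((1 + x ^ 2) ^ (-(s/2))) *
        (ENNReal.ofReal ((1 + x ^ 2) ^ (s/2)) * g x)) = A := by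
      rw [hA_def]; exact lintegral_congr fun x => (hpt x).symm
    have e2 : (∫⁻ x : ℝ, (ENNReal.ofReal ((1 + x ^ 2) ^ (-(s/2)))) ^ 2) = Cs := by
      apply lintegral_congr; intro x
      rw [← ENNReal.ofReal_pow (Real.rpow_nonneg (hx0 x).le _), ← Real.rpow_natCast _ 2,
        ← Real.rpow_mul (hx0 x).le]
      norm_num
    have e3 : (∫⁻ x : ℝ, (ENNReal.ofReal ((1 + x ^ 2) ^ (s/2)) * g x) ^ 2)
        = ∫⁻ x, W x * g x ^ 2 := by
      apply lintegral_congr; intro x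
      rw [mul_pow, ← ENNReal.ofReal_pow (Real.rpow_nonneg (hx0 x).le _), ← Real.rpow_natCast _ 2,
        ← Real.rpow_mul (hx0 x).le]
      norm_num
      rfl
    calc A ^ 2 = (∫⁻ x : ℝ, ENNReal.ofReal ((1 + x ^ 2) ^ (-(s/2))) *
          (ENNReal.ofReal ((1 + x ^ 2) ^ (s/2)) * g x)) ^ 2 := by rw [e1]
      _ ≤ (∫⁻ x : ℝ, (ENNReal.ofReal ((1 + x ^ 2) ^ (-(s/2)))) ^ 2) *
          (∫⁻ x : ℝ, (ENNReal.ofReal ((1 + x ^ 2) ^ (s/2)) * g x) ^ 2) := hcs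
      _ = Cs * ∫⁻ x, W x * g x ^ 2 := by rw [e2, e3]
  -- T z λ
  set T : ℝ → ℝ → ℝ≥0∞ := fun z l => ∫⁻ u in Set.Ioi (0:ℝ), f (z - u) * g (u - l) with hT_def
  -- pointwise bound on the kernel
  have h_pt : ∀ p : ℝ × ℝ, (‖Kern F G p‖₊ : ℝ≥0∞) ^ 2 ≤
      (if p.1 < 0 then (T p.1 p.2) ^ 2 else 0) := by
    intro p
    by_cases h : p.1 < 0
    · simp only [Kern, if_pos h]
      refine pow_le_pow_left₀ zero_le ?_ 2
      refine le_trans (enorm_integral_le_lintegral_enorm _) ?_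
      refine le_of_eq (lintegral_congr fun u => ?_)
      simp [hf_def, hg_def, nnnorm_mul, ENNReal.coe_mul, enorm_eq_nnnorm]
    · simp [Kern, h]
  -- Cauchy–Schwarz in u
  have hT2 : ∀ z l : ℝ, (T z l) ^ 2 ≤ A * ∫⁻ u in Set.Ioi (0:ℝ), f (z - u) ^ 2 * g (u - l) := by
    intro z l
    have half : ∀ a : ℝ≥0∞, a = a ^ ((1:ℝ)/2) * a ^ ((1:ℝ)/2) := fun a => by
      rw [← ENNReal.rpow_add_of_nonneg ((1:ℝ)/2) ((1:ℝ)/2) (by norm_num) (by norm_num)]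
      norm_num
    have key : T z l = ∫⁻ u in Set.Ioi (0:ℝ),
        (f (z - u) * g (u - l) ^ ((1:ℝ)/2)) * (g (u - l) ^ ((1:ℝ)/2)) := by
      refine lintegral_congr fun u => ?_
      rw [mul_assoc]
      congr 1
      exact half _
    have m1 : Measurable fun u => f (z - u) * g (u - l) ^ ((1:ℝ)/2) := by
      exact (mf.comp (measurable_const.sub measurable_id)).mul
        ((mg.comp (measurable_id.sub measurable_const)).pow_const _)
    have m2 : Measurable fun u : ℝ => g (u - l) ^ ((1:ℝ)/2) :=
      (mg.comp (measurable_id.sub measurable_const)).pow_const _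
    have hcs := cs_sq ((volume : Measure ℝ).restrict (Set.Ioi (0:ℝ)))
      m1.aemeasurable m2.aemeasurable
    rw [key]
    refine hcs.trans ?_
    have sq_half : ∀ a : ℝ≥0∞, (a ^ ((1:ℝ)/2)) ^ 2 = a := fun a => by
      rw [← ENNReal.rpow_natCast (a ^ ((1:ℝ)/2)) 2, ← ENNReal.rpow_mul]; norm_num
    have e1 : (∫⁻ u in Set.Ioi (0:ℝ), (f (z - u) * g (u - l) ^ ((1:ℝ)/2)) ^ 2)
        = ∫⁻ u in Set.Ioi (0:ℝ), f (z - u) ^ 2 * g (u - l) := by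
      refine lintegral_congr fun u => ?_
      rw [mul_pow, sq_half]
    have e2 : (∫⁻ u in Set.Ioi (0:ℝ), (g (u - l) ^ ((1:ℝ)/2)) ^ 2) ≤ A := by
      refine le_trans (le_of_eq (lintegral_congr fun u => sq_half _)) ?_
      refine le_trans (lintegral_mono' Measure.restrict_le_self le_rfl) ?_
      exact (trans_g l).le
    rw [e1]
    calc (∫⁻ u in Set.Ioi (0:ℝ), f (z - u) ^ 2 * g (u - l)) *
          (∫⁻ u in Set.Ioi (0:ℝ), (g (u - l) ^ ((1:ℝ)/2)) ^ 2)
        ≤ (∫⁻ u in Set.Ioi (0:ℝ), f (z - u) ^ 2 * g (u - l)) * A := mul_le_mul_right e2 _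
      _ = A * ∫⁻ u in Set.Ioi (0:ℝ), f (z - u) ^ 2 * g (u - l) := mul_comm _ _
  -- integrate in λ
  have hInt : ∀ z : ℝ, (∫⁻ l : ℝ, (T z l) ^ 2) ≤ A ^ 2 * ∫⁻ u in Set.Ioi (0:ℝ), f (z - u) ^ 2 := by
    intro z
    have mprod : Measurable fun q : ℝ × ℝ => f (z - q.2) ^ 2 * g (q.2 - q.1) := by
      exact ((mf.comp (measurable_const.sub measurable_snd)).pow_const 2).mul
        (mg.comp (measurable_snd.sub measurable_fst))
    have minner : Measurable fun l : ℝ => ∫⁻ u in Set.Ioi (0:ℝ), f (z - u) ^ 2 * g (u - l) :=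
      Measurable.lintegral_prod_right' (f := fun q : ℝ × ℝ => f (z - q.2) ^ 2 * g (q.2 - q.1)) mprod
    calc (∫⁻ l : ℝ, (T z l) ^ 2)
        ≤ ∫⁻ l : ℝ, A * ∫⁻ u in Set.Ioi (0:ℝ), f (z - u) ^ 2 * g (u - l) :=
          lintegral_mono fun l => hT2 z l
      _ = A * ∫⁻ l : ℝ, ∫⁻ u in Set.Ioi (0:ℝ), f (z - u) ^ 2 * g (u - l) :=
          lintegral_const_mul A minner
      _ = A * ∫⁻ u in Set.Ioi (0:ℝ), ∫⁻ l : ℝ, f (z - u) ^ 2 * g (u - l) := by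
          rw [lintegral_lintegral_swap]
          exact ((mf.comp (measurable_const.sub measurable_snd)).pow_const 2).mul
            (mg.comp (measurable_snd.sub measurable_fst)) |>.aemeasurable
      _ = A * ∫⁻ u in Set.Ioi (0:ℝ), f (z - u) ^ 2 * A := by
          congr 1
          refine lintegral_congr fun u => ?_
          have mgu : Measurable fun l : ℝ => g (u - l) :=
            mg.comp (measurable_const.sub measurable_id)
          rw [lintegral_const_mul _ mgu, refl_g]
      _ = A ^ 2 * ∫⁻ u in Set.Ioi (0:ℝ), f (z - u) ^ 2 := by
          have mfu : Measurable fun u : ℝ => f (z - u) ^ 2 :=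
            (mf.comp (measurable_const.sub measurable_id)).pow_const 2
          rw [lintegral_mul_const _ mfu]
          ring
  -- z-integration of the tail integral
  have hz : (∫⁻ z in Set.Iio (0:ℝ), ∫⁻ u in Set.Ioi (0:ℝ), f (z - u) ^ 2) ≤
      ∫⁻ t : ℝ, W t * f t ^ 2 := by
    have step_a : ∀ z : ℝ, (∫⁻ u in Set.Ioi (0:ℝ), f (z - u) ^ 2)
        = ∫⁻ t : ℝ, (Set.Iio z).indicator (fun t => f t ^ 2) t := by
      intro z
      rw [← lintegral_indicator measurableSet_Ioi]
      have mφ : Measurable fun u : ℝ => (Set.Ioi (0:ℝ)).indicator (fun u => f (z - u) ^ 2) u :=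
        ((mf.comp (measurable_const.sub measurable_id)).pow_const 2).indicator measurableSet_Ioi
      rw [← (Measure.measurePreserving_sub_left (volume : Measure ℝ) z).lintegral_comp mφ]
      refine lintegral_congr fun t => ?_
      by_cases h : t < z
      · rw [Set.indicator_of_mem (by simpa [Set.mem_Ioi] using h),
          Set.indicator_of_mem (Set.mem_Iio.mpr h)]
        simp
      · rw [Set.indicator_of_notMem (by simpa [Set.mem_Ioi] using h),
          Set.indicator_of_notMem (by simpa [Set.mem_Iio] using h)]
    calc (∫⁻ z in Set.Iio (0:ℝ), ∫⁻ u in Set.Ioi (0:ℝ), f (z - u) ^ 2)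
        = ∫⁻ z in Set.Iio (0:ℝ), ∫⁻ t : ℝ, (Set.Iio z).indicator (fun t => f t ^ 2) t := by
          exact lintegral_congr fun z => step_a z
      _ = ∫⁻ z : ℝ, ∫⁻ t : ℝ, (Set.Ioo t (0:ℝ)).indicator (fun _ => f t ^ 2) z ∂volume ∂volume := by
          rw [← lintegral_indicator measurableSet_Iio]
          refine lintegral_congr fun z => ?_
          by_cases hznn : z < 0
          · rw [Set.indicator_of_mem (Set.mem_Iio.mpr hznn)]
            refine lintegral_congr fun t => ?_
            by_cases h : t < z
            · rw [Set.indicator_of_mem (Set.mem_Iio.mpr h),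
                Set.indicator_of_mem (Set.mem_Ioo.mpr ⟨h, hznn⟩)]
            · rw [Set.indicator_of_notMem (by simpa [Set.mem_Iio] using h),
                Set.indicator_of_notMem (fun hc => h (Set.mem_Ioo.mp hc).1)]
          · rw [Set.indicator_of_notMem (by simpa [Set.mem_Iio] using hznn)]
            symm
            rw [← lintegral_zero]
            refine lintegral_congr fun t => ?_
            exact Set.indicator_of_notMem (fun hc => hznn (Set.mem_Ioo.mp hc).2) _
      _ = ∫⁻ t : ℝ, ∫⁻ z : ℝ, (Set.Ioo t (0:ℝ)).indicator (fun _ => f t ^ 2) z ∂volume ∂volume := by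
          rw [lintegral_lintegral_swap]
          apply Measurable.aemeasurable
          have heq : (Function.uncurry fun z t : ℝ =>
                (Set.Ioo t (0:ℝ)).indicator (fun _ => f t ^ 2) z)
              = fun q : ℝ × ℝ => (if q.2 < q.1 ∧ q.1 < 0 then (1:ℝ≥0∞) else 0) * f q.2 ^ 2 := by
            funext q
            show (Set.Ioo q.2 (0:ℝ)).indicator (fun _ => f q.2 ^ 2) q.1 = _
            by_cases h : q.2 < q.1 ∧ q.1 < 0
            · rw [Set.indicator_of_mem (Set.mem_Ioo.mpr h), if_pos h, one_mul]
            · rw [Set.indicator_of_notMem (fun hc => h (Set.mem_Ioo.mp hc)), if_neg h, zero_mul]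
          rw [heq]
          have hset : MeasurableSet {q : ℝ × ℝ | q.2 < q.1 ∧ q.1 < 0} :=
            (measurableSet_lt measurable_snd measurable_fst).inter
              (measurableSet_lt measurable_fst measurable_const)
          exact (Measurable.ite hset measurable_const measurable_const).mul
            ((mf.comp measurable_snd).pow_const 2)
      _ ≤ ∫⁻ t : ℝ, W t * f t ^ 2 := by
          refine lintegral_mono fun t => ?_
          rw [lintegral_indicator measurableSet_Ioo, setLIntegral_const, Real.volume_Ioo]
          rw [mul_comm]
          refine mul_le_mul_left ?_ _
          refine ENNReal.ofReal_le_ofReal ?_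
          simpa using neg_le_weight hs.le t
  -- Assemble
  have mK2 : Measurable fun p : ℝ × ℝ => (‖Kern F G p‖₊ : ℝ≥0∞) ^ 2 :=
    ((measurable_kern F G hF hG).nnnorm.coe_nnreal_ennreal).pow_const 2
  have mS : Measurable fun z : ℝ => ∫⁻ u in Set.Ioi (0:ℝ), f (z - u) ^ 2 :=
    Measurable.lintegral_prod_right' (f := fun q : ℝ × ℝ => f (q.1 - q.2) ^ 2)
      ((mf.comp (measurable_fst.sub measurable_snd)).pow_const 2)
  calc (∫⁻ p : ℝ × ℝ, (‖Kern F G p‖₊ : ℝ≥0∞) ^ 2)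
      = ∫⁻ z : ℝ, ∫⁻ l : ℝ, (‖Kern F G (z, l)‖₊ : ℝ≥0∞) ^ 2 := by
        rw [Measure.volume_eq_prod, lintegral_prod _ mK2.aemeasurable]
    _ ≤ ∫⁻ z : ℝ, (if z < 0 then A ^ 2 * ∫⁻ u in Set.Ioi (0:ℝ), f (z - u) ^ 2 else 0) := by
        refine lintegral_mono fun z => ?_
        by_cases h : z < 0
        · simp only [if_pos h]
          refine le_trans (lintegral_mono fun l => ?_) (hInt z)
          simpa [if_pos h] using h_pt (z, l)
        · simp only [if_neg h]
          refine le_of_eq ?_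
          rw [← lintegral_zero]
          refine lintegral_congr fun l => ?_
          have := h_pt (z, l)
          rw [if_neg h] at this
          exact le_antisymm this zero_le
    _ = A ^ 2 * ∫⁻ z in Set.Iio (0:ℝ), ∫⁻ u in Set.Ioi (0:ℝ), f (z - u) ^ 2 := by
        rw [← lintegral_indicator measurableSet_Iio, ← lintegral_const_mul _ (mS.indicator measurableSet_Iio)]
        refine lintegral_congr fun z => ?_
        by_cases h : z < 0
        · rw [if_pos h, Set.indicator_of_mem (Set.mem_Iio.mpr h)]
        · rw [if_neg h, Set.indicator_of_notMem (by simpa [Set.mem_Iio] using h), mul_zero]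
    _ ≤ A ^ 2 * ∫⁻ t : ℝ, W t * f t ^ 2 := mul_le_mul_right hz _
    _ ≤ (Cs * ∫⁻ x, W x * g x ^ 2) * ∫⁻ t : ℝ, W t * f t ^ 2 := mul_le_mul_left hA2 _
    _ = Cs * (∫⁻ x, W x * g x ^ 2) * ∫⁻ t : ℝ, W t * f t ^ 2 := by rw [mul_assoc]

private lemma eLpNorm_two_sq {α : Type*} [MeasurableSpace α] (μ : Measure α) (h : α → ℂ) :
    (eLpNorm h 2 μ) ^ 2 = ∫⁻ x, (‖h x‖₊ : ℝ≥0∞) ^ 2 ∂μ := by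
  rw [eLpNorm_eq_lintegral_rpow_enorm_toReal two_ne_zero ENNReal.ofNat_ne_top]
  rw [← ENNReal.rpow_natCast (_ ^ _) 2, ← ENNReal.rpow_mul]
  norm_num
  rfl

/-- For `s > 1/2` there is `C(s) > 0` such that for all
`F, G ∈ L^{2,s}(ℝ)` the kernel `K(z,λ) = 1_{(−∞,0)}(z)∫₀^∞ F(z−u)G(u−λ)du` lies in
`L²(ℝ×ℝ)` with `‖K‖_{L²(ℝ×ℝ)} ≤ C(s)‖F‖_{L^{2,s}}‖G‖_{L^{2,s}}` (hence the corresponding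
integral operator is Hilbert–Schmidt, and compact). -/
theorem hilbert_schmidt_kernel_bound (s : ℝ) (hs : 1 / 2 < s) :
    ∃ C > (0 : ℝ), ∀ F G : ℝ → ℂ, MemL2s s F → MemL2s s G →
      MemLp (Kern F G) 2 (volume : Measure (ℝ × ℝ)) ∧
      eLpNorm (Kern F G) 2 (volume : Measure (ℝ × ℝ)) ≤
        ENNReal.ofReal (C * L2sNorm s F * L2sNorm s G) := by
  set Cs : ℝ≥0∞ := ∫⁻ x : ℝ, ENNReal.ofReal ((1 + x ^ 2) ^ (-s)) with hCs_def
  have hCs_lt : Cs < ⊤ := weight_int hs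
  have hCpos : (0:ℝ) < Cs.toReal ^ ((1:ℝ)/2) + 1 := by positivity
  refine ⟨Cs.toReal ^ ((1:ℝ)/2) + 1, hCpos, ?_⟩
  intro F G hFm hGm
  obtain ⟨hF, hFL⟩ := hFm
  obtain ⟨hG, hGL⟩ := hGm
  set Nf : ℝ≥0∞ := eLpNorm (fun x : ℝ => ((1 + x ^ 2) ^ (s / 2) : ℝ) • F x) 2 volume with hNf_def
  set Ng : ℝ≥0∞ := eLpNorm (fun x : ℝ => ((1 + x ^ 2) ^ (s / 2) : ℝ) • G x) 2 volume with hNg_def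
  have hNf_lt : Nf < ⊤ := hFL.2
  have hNg_lt : Ng < ⊤ := hGL.2
  have hx0 : ∀ x : ℝ, (0:ℝ) < 1 + x ^ 2 := fun x => by positivity
  have hsq : ∀ H : ℝ → ℂ, (∫⁻ x : ℝ, ENNReal.ofReal ((1 + x ^ 2) ^ s) * (‖H x‖₊ : ℝ≥0∞) ^ 2)
      = (eLpNorm (fun x : ℝ => ((1 + x ^ 2) ^ (s / 2) : ℝ) • H x) 2 volume) ^ 2 := by
    intro H
    rw [eLpNorm_two_sq]
    refine lintegral_congr fun x => ?_
    have hrw : ((1 + x ^ 2) ^ (s/2)) ^ (2:ℕ) = (1 + x ^ 2) ^ s := by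
      rw [← Real.rpow_natCast ((1 + x ^ 2) ^ (s/2)) 2, ← Real.rpow_mul (hx0 x).le]
      norm_num
    rw [nnnorm_smul, ENNReal.coe_mul, ← enorm_eq_nnnorm ((1 + x ^ 2) ^ (s / 2) : ℝ), Real.enorm_eq_ofReal (Real.rpow_nonneg (hx0 x).le _),
      mul_pow, ← ENNReal.ofReal_pow (Real.rpow_nonneg (hx0 x).le _), hrw]
  have hbound := kern_sq_bound s hs F G hF hG
  rw [hsq G, hsq F, ← hNf_def, ← hNg_def, ← hCs_def] at hbound
  have hK2 : eLpNorm (Kern F G) 2 (volume : Measure (ℝ × ℝ)) ^ 2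
      = ∫⁻ p : ℝ × ℝ, (‖Kern F G p‖₊ : ℝ≥0∞) ^ 2 := eLpNorm_two_sq _ _
  have hfin : eLpNorm (Kern F G) 2 (volume : Measure (ℝ × ℝ)) ^ 2 ≤ Cs * Ng ^ 2 * Nf ^ 2 := by
    rw [hK2]; exact hbound
  have hle : eLpNorm (Kern F G) 2 (volume : Measure (ℝ × ℝ)) ≤ Cs ^ ((1:ℝ)/2) * Ng * Nf := by
    have h1 : (eLpNorm (Kern F G) 2 (volume : Measure (ℝ × ℝ)) ^ 2) ^ ((1:ℝ)/2)
        ≤ (Cs * Ng ^ 2 * Nf ^ 2) ^ ((1:ℝ)/2) := ENNReal.rpow_le_rpow hfin (by norm_num)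
    have sqrt_sq : ∀ a : ℝ≥0∞, (a ^ 2) ^ ((1:ℝ)/2) = a := fun a => by
      rw [← ENNReal.rpow_natCast a 2, ← ENNReal.rpow_mul]; norm_num
    calc eLpNorm (Kern F G) 2 (volume : Measure (ℝ × ℝ))
        = (eLpNorm (Kern F G) 2 (volume : Measure (ℝ × ℝ)) ^ 2) ^ ((1:ℝ)/2) := (sqrt_sq _).symm
      _ ≤ (Cs * Ng ^ 2 * Nf ^ 2) ^ ((1:ℝ)/2) := h1
      _ = Cs ^ ((1:ℝ)/2) * Ng * Nf := by
          rw [ENNReal.mul_rpow_of_nonneg _ _ (by norm_num : (0:ℝ) ≤ 1/2),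
            ENNReal.mul_rpow_of_nonneg _ _ (by norm_num : (0:ℝ) ≤ 1/2), sqrt_sq, sqrt_sq]
  constructor
  · refine ⟨(measurable_kern F G hF hG).aestronglyMeasurable, lt_of_le_of_lt hle ?_⟩
    refine ENNReal.mul_lt_top (ENNReal.mul_lt_top ?_ hNg_lt) hNf_lt
    exact ENNReal.rpow_lt_top_of_nonneg (by norm_num) hCs_lt.ne
  · refine hle.trans ?_
    have hC : Cs ^ ((1:ℝ)/2) ≤ ENNReal.ofReal (Cs.toReal ^ ((1:ℝ)/2) + 1) := by
      conv_lhs => rw [← ENNReal.ofReal_toReal hCs_lt.ne]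
      rw [ENNReal.ofReal_rpow_of_nonneg ENNReal.toReal_nonneg (by norm_num : (0:ℝ) ≤ 1/2)]
      exact ENNReal.ofReal_le_ofReal (by linarith)
    have hNfe : Nf = ENNReal.ofReal (L2sNorm s F) := by
      have : L2sNorm s F = Nf.toReal := rfl
      rw [this, ENNReal.ofReal_toReal hNf_lt.ne]
    have hNge : Ng = ENNReal.ofReal (L2sNorm s G) := by
      have : L2sNorm s G = Ng.toReal := rfl
      rw [this, ENNReal.ofReal_toReal hNg_lt.ne]
    calc Cs ^ ((1:ℝ)/2) * Ng * Nf
        ≤ ENNReal.ofReal (Cs.toReal ^ ((1:ℝ)/2) + 1) * ENNReal.ofReal (L2sNorm s G)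
          * ENNReal.ofReal (L2sNorm s F) := by
          rw [hNfe, hNge]
          exact mul_le_mul_left (mul_le_mul_left hC _) _
      _ = ENNReal.ofReal ((Cs.toReal ^ ((1:ℝ)/2) + 1) * L2sNorm s F * L2sNorm s G) := by
          have hLF : 0 ≤ L2sNorm s F := ENNReal.toReal_nonneg
          rw [ENNReal.ofReal_mul (mul_nonneg (by positivity) hLF),
            ENNReal.ofReal_mul (by positivity : (0:ℝ) ≤ Cs.toReal ^ ((1:ℝ)/2) + 1)]
          ring
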